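/- Suppose C, H : V → V are symmetric linear operators with C ≥ α_C · Id and H ≥ α_H · Id for positive constants α_C, α_H, let d > 0, and define F(Q) := C Q + H Q + d ∇h_γ(Q − P) for a fixed P ∈ V. Then F is strongly monotone: (F(Q₁) − F(Q₂)) · (Q₁ − Q₂) ≥ (α_C + α_H) |Q₁ − Q₂|² for all Q₁, Q₂ ∈ V. -/
import Mathlib


open scoped RealInnerProductSpace

lemma grad_mono {V : Type*} [NormedAddCommGroup V] [InnerProductSpace ℝ V]
    (c : ℝ) (hc : 0 < c) (x y : V) :
    0 ≤ ⟪(Real.sqrt (‖x‖ ^ 2 + c))⁻¹ • x - (Real.sqrt (‖y‖ ^ 2 + c))⁻¹ • y, x - y⟫ := by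
  set a := Real.sqrt (‖x‖ ^ 2 + c) with ha_def
  set b := Real.sqrt (‖y‖ ^ 2 + c) with hb_def
  have ha : 0 < a := Real.sqrt_pos.mpr (by positivity)
  have hb : 0 < b := Real.sqrt_pos.mpr (by positivity)
  have ha2 : a ^ 2 = ‖x‖ ^ 2 + c := Real.sq_sqrt (by positivity)
  have hb2 : b ^ 2 = ‖y‖ ^ 2 + c := Real.sq_sqrt (by positivity)
  have hxy : ⟪x, y⟫ ≤ ‖x‖ * ‖y‖ := real_inner_le_norm x y
  have hxn : (0:ℝ) ≤ ‖x‖ := norm_nonneg x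
  have hyn : (0:ℝ) ≤ ‖y‖ := norm_nonneg y
  have hix : ⟪x, x⟫ = ‖x‖ ^ 2 := real_inner_self_eq_norm_sq x
  have hiy : ⟪y, y⟫ = ‖y‖ ^ 2 := real_inner_self_eq_norm_sq y
  have hsym : ⟪y, x⟫ = ⟪x, y⟫ := real_inner_comm x y
  rw [inner_sub_left, inner_sub_right, inner_sub_right, real_inner_smul_left,
    real_inner_smul_left, real_inner_smul_left, real_inner_smul_left,
    hix, hiy, hsym]
  have hprod : 0 ≤ (‖x‖ - ‖y‖) * (b * ‖x‖ - a * ‖y‖) := by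
    rcases le_total ‖x‖ ‖y‖ with h | h
    · have h2 : ‖x‖ ^ 2 ≤ ‖y‖ ^ 2 := pow_le_pow_left₀ hxn h 2
      have e1 : a ^ 2 * ‖y‖ ^ 2 = (‖x‖ ^ 2 + c) * ‖y‖ ^ 2 := by rw [ha2]
      have e2 : b ^ 2 * ‖x‖ ^ 2 = (‖y‖ ^ 2 + c) * ‖x‖ ^ 2 := by rw [hb2]
      have hsq : (b * ‖x‖) ^ 2 ≤ (a * ‖y‖) ^ 2 := by
        nlinarith [mul_nonneg hc.le (sub_nonneg.mpr h2)]
      have hle : b * ‖x‖ ≤ a * ‖y‖ := by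
        calc b * ‖x‖ = Real.sqrt ((b * ‖x‖) ^ 2) := (Real.sqrt_sq (by positivity)).symm
          _ ≤ Real.sqrt ((a * ‖y‖) ^ 2) := Real.sqrt_le_sqrt hsq
          _ = a * ‖y‖ := Real.sqrt_sq (by positivity)
      nlinarith
    · have h2 : ‖y‖ ^ 2 ≤ ‖x‖ ^ 2 := pow_le_pow_left₀ hyn h 2
      have e1 : a ^ 2 * ‖y‖ ^ 2 = (‖x‖ ^ 2 + c) * ‖y‖ ^ 2 := by rw [ha2]
      have e2 : b ^ 2 * ‖x‖ ^ 2 = (‖y‖ ^ 2 + c) * ‖x‖ ^ 2 := by rw [hb2]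
      have hsq : (a * ‖y‖) ^ 2 ≤ (b * ‖x‖) ^ 2 := by
        nlinarith [mul_nonneg hc.le (sub_nonneg.mpr h2)]
      have hle : a * ‖y‖ ≤ b * ‖x‖ := by
        calc a * ‖y‖ = Real.sqrt ((a * ‖y‖) ^ 2) := (Real.sqrt_sq (by positivity)).symm
          _ ≤ Real.sqrt ((b * ‖x‖) ^ 2) := Real.sqrt_le_sqrt hsq
          _ = b * ‖x‖ := Real.sqrt_sq (by positivity)
      nlinarith
  have key : 0 ≤ b * ‖x‖ ^ 2 + a * ‖y‖ ^ 2 - (a + b) * ⟪x, y⟫ := by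
    have h2 : b * ‖x‖ ^ 2 + a * ‖y‖ ^ 2 - (a + b) * (‖x‖ * ‖y‖)
        = (‖x‖ - ‖y‖) * (b * ‖x‖ - a * ‖y‖) := by ring
    nlinarith [add_pos ha hb]
  have hab : 0 < a * b := mul_pos ha hb
  have hdiv : 0 ≤ (b * ‖x‖ ^ 2 + a * ‖y‖ ^ 2 - (a + b) * ⟪x, y⟫) / (a * b) :=
    div_nonneg key hab.le
  have expand : a⁻¹ * ‖x‖ ^ 2 - a⁻¹ * ⟪x, y⟫ - (b⁻¹ * ⟪x, y⟫ - b⁻¹ * ‖y‖ ^ 2)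
      = (b * ‖x‖ ^ 2 + a * ‖y‖ ^ 2 - (a + b) * ⟪x, y⟫) / (a * b) := by
    field_simp
    ring
  linarith [expand.symm ▸ hdiv]

theorem F_strongly_monotone
    {V : Type*} [NormedAddCommGroup V] [InnerProductSpace ℝ V] [FiniteDimensional ℝ V]
    (γ : ℝ) (hγ : 0 < γ) (P : V) (C H : V →ₗ[ℝ] V)
    (hCsym : ∀ x y : V, ⟪C x, y⟫ = ⟪x, C y⟫)
    (hHsym : ∀ x y : V, ⟪H x, y⟫ = ⟪x, H y⟫)
    (αC αH : ℝ) (hαC : 0 < αC) (hαH : 0 < αH)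
    (hCcoer : ∀ E : V, αC * ‖E‖ ^ 2 ≤ ⟪C E, E⟫)
    (hHcoer : ∀ E : V, αH * ‖E‖ ^ 2 ≤ ⟪H E, E⟫)
    (d : ℝ) (hd : 0 < d)
    (F : V → V)
    (hF : ∀ Q : V, F Q = C Q + H Q +
        d • ((Real.sqrt (‖Q - P‖ ^ 2 + 1 / γ ^ 2))⁻¹ • (Q - P))) :
    ∀ Q₁ Q₂ : V, (αC + αH) * ‖Q₁ - Q₂‖ ^ 2 ≤ ⟪F Q₁ - F Q₂, Q₁ - Q₂⟫ := by
  intro Q₁ Q₂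
  set E := Q₁ - Q₂ with hE
  have hc : (0:ℝ) < 1 / γ ^ 2 := by positivity
  have hmono := grad_mono (1 / γ ^ 2) hc (Q₁ - P) (Q₂ - P)
  have hdiff : (Q₁ - P) - (Q₂ - P) = E := by rw [hE]; abel
  rw [hdiff] at hmono
  set g₁ := (Real.sqrt (‖Q₁ - P‖ ^ 2 + 1 / γ ^ 2))⁻¹ • (Q₁ - P) with hg₁
  set g₂ := (Real.sqrt (‖Q₂ - P‖ ^ 2 + 1 / γ ^ 2))⁻¹ • (Q₂ - P) with hg₂
  have key : ∀ A B x y : V, (C x + H x + d • A) - (C y + H y + d • B)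
      = C (x - y) + H (x - y) + d • (A - B) := by
    intro A B x y
    rw [map_sub, map_sub, smul_sub]
    abel
  have hFdiff : F Q₁ - F Q₂ = C E + H E + d • (g₁ - g₂) := by
    rw [hF Q₁, hF Q₂, hE]
    exact key _ _ _ _
  rw [hFdiff, inner_add_left, inner_add_left, real_inner_smul_left]
  have h3 : 0 ≤ d * ⟪g₁ - g₂, E⟫ := mul_nonneg hd.le hmono
  have := hCcoer E
  have := hHcoer E
  nlinarith [sq_nonneg ‖E‖]
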